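/- Let I be a finite index type and (G_i)_{i ∈ I} a family of groups, and let P = ∏_{i ∈ I} G_i be their direct product, with each G_i identified with its canonical factor subgroup of P. Then the subgroup of Aut(P) consisting of those automorphisms φ such that for every i ∈ I there exists g ∈ P with φ(x) = g x g⁻¹ for all x in the factor G_i, is isomorphic to the direct product ∏_{i ∈ I} G_i/Z(G_i). -/

import Mathlib

section Aux

variable {I : Type} [DecidableEq I] (G : I → Type) [∀ i, Group (G i)]

/-- Conjugating a `mulSingle` by an element of the product is `mulSingle` of the conjugate. -/
theorem conj_mulSingle_aux (g : ∀ j, G j) (i : I) (x : G i) :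
    g * Pi.mulSingle i x * g⁻¹ = Pi.mulSingle i (g i * x * (g i)⁻¹) := by
  funext j
  by_cases h : j = i
  · subst h; simp
  · simp [Pi.mulSingle_apply, h]

end Aux

/-- The subgroup of automorphisms of a finite direct product acting on each factor by
conjugation is isomorphic to the product of the inner automorphism groups of the factors. -/
theorem conjAut_of_directProduct {I : Type} [Fintype I] [DecidableEq I]
    (G : I → Type) [∀ i, Group (G i)]
    (C : Subgroup (MulAut (∀ i, G i)))
    (hC : ∀ φ : MulAut (∀ i, G i), φ ∈ C ↔
      ∀ i : I, ∃ g : ∀ j, G j, ∀ x ∈ (MonoidHom.mulSingle G i).range, φ x = g * x * g⁻¹) :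
    Nonempty (C ≃* ∀ i, G i ⧸ Subgroup.center (G i)) := by
  classical
  -- Key: each φ ∈ C acts on the i-th factor by conjugation by some gi : G i.
  have key : ∀ φ : C, ∀ i : I, ∃ gi : G i,
      ∀ x : G i, (φ : MulAut (∀ i, G i)) (Pi.mulSingle i x)
        = Pi.mulSingle i (gi * x * gi⁻¹) := by
    intro φ i
    obtain ⟨g, hg⟩ := (hC φ).1 φ.2 i
    refine ⟨g i, fun x => ?_⟩
    have hx : Pi.mulSingle i x ∈ (MonoidHom.mulSingle G i).range := ⟨x, rfl⟩
    rw [hg _ hx, conj_mulSingle_aux]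
  set f : C → ∀ i, G i ⧸ Subgroup.center (G i) :=
    fun φ i => QuotientGroup.mk (Classical.choose (key φ i)) with hf
  -- Specification of f : any gi that conjugates factor i gives the value of f.
  have fspec : ∀ (φ : C) (i : I) (gi : G i),
      (∀ x : G i, (φ : MulAut (∀ i, G i)) (Pi.mulSingle i x)
        = Pi.mulSingle i (gi * x * gi⁻¹)) →
      f φ i = QuotientGroup.mk gi := by
    intro φ i gi hgi
    have h1 := Classical.choose_spec (key φ i)
    set g1 := Classical.choose (key φ i) with hg1
    have hconj : ∀ x : G i, g1 * x * g1⁻¹ = gi * x * gi⁻¹ := by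
      intro x
      exact Pi.mulSingle_injective (M := G) i ((h1 x).symm.trans (hgi x))
    show (QuotientGroup.mk g1 : G i ⧸ Subgroup.center (G i)) = QuotientGroup.mk gi
    rw [QuotientGroup.eq]
    rw [Subgroup.mem_center_iff]
    intro y
    have hx := hconj y
    calc y * (g1⁻¹ * gi) = g1⁻¹ * (g1 * y * g1⁻¹) * gi := by group
      _ = g1⁻¹ * (gi * y * gi⁻¹) * gi := by rw [hx]
      _ = (g1⁻¹ * gi) * y := by group
  -- f is multiplicative
  have fmul : ∀ φ ψ : C, f (φ * ψ) = f φ * f ψ := by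
    intro φ ψ
    funext i
    obtain ⟨gφ, hgφ⟩ := key φ i
    obtain ⟨gψ, hgψ⟩ := key ψ i
    have : ∀ x : G i, ((φ * ψ : C) : MulAut (∀ i, G i)) (Pi.mulSingle i x)
        = Pi.mulSingle i ((gφ * gψ) * x * (gφ * gψ)⁻¹) := by
      intro x
      have : ((φ * ψ : C) : MulAut (∀ i, G i)) (Pi.mulSingle i x)
          = (φ : MulAut (∀ i, G i)) ((ψ : MulAut (∀ i, G i)) (Pi.mulSingle i x)) := rfl
      rw [this, hgψ, hgφ]
      refine congrArg (Pi.mulSingle i) ?_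
      group
    rw [fspec _ _ _ this, Pi.mul_apply, fspec _ _ _ hgφ, fspec _ _ _ hgψ,
      ← QuotientGroup.mk_mul]
  -- f is injective
  have finj : Function.Injective f := by
    intro φ ψ hfφψ
    have heq : ∀ i (x : G i), (φ : MulAut (∀ i, G i)) (Pi.mulSingle i x)
        = (ψ : MulAut (∀ i, G i)) (Pi.mulSingle i x) := by
      intro i x
      obtain ⟨gφ, hgφ⟩ := key φ i
      obtain ⟨gψ, hgψ⟩ := key ψ i
      have h := congrFun hfφψ i
      rw [fspec _ _ _ hgφ, fspec _ _ _ hgψ, QuotientGroup.eq, Subgroup.mem_center_iff] at h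
      rw [hgφ, hgψ]
      have hx := h x
      refine congrArg (Pi.mulSingle i) ?_
      calc gφ * x * gφ⁻¹ = gφ * (x * (gφ⁻¹ * gψ)) * gψ⁻¹ := by group
        _ = gφ * ((gφ⁻¹ * gψ) * x) * gψ⁻¹ := by rw [hx]
        _ = gψ * x * gψ⁻¹ := by group
    have : ((φ : MulAut (∀ i, G i)) : (∀ i, G i) →* (∀ i, G i))
        = ((ψ : MulAut (∀ i, G i)) : (∀ i, G i) →* (∀ i, G i)) :=
      MonoidHom.pi_ext (fun i x => heq i x)
    refine Subtype.ext (MulEquiv.ext fun x => ?_)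
    exact DFunLike.congr_fun this x
  -- f is surjective
  have fsurj : Function.Surjective f := by
    intro q
    set g : ∀ i, G i := fun i => (q i).out with hg
    have hmem : MulAut.conj g ∈ C := by
      rw [hC]
      intro i
      exact ⟨g, fun x _ => MulAut.conj_apply g x⟩
    refine ⟨⟨MulAut.conj g, hmem⟩, ?_⟩
    funext i
    have : ∀ x : G i, ((⟨MulAut.conj g, hmem⟩ : C) : MulAut (∀ i, G i)) (Pi.mulSingle i x)
        = Pi.mulSingle i (g i * x * (g i)⁻¹) := by
      intro x
      rw [show ((⟨MulAut.conj g, hmem⟩ : C) : MulAut (∀ i, G i)) (Pi.mulSingle i x)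
        = g * Pi.mulSingle i x * g⁻¹ from MulAut.conj_apply g _, conj_mulSingle_aux]
    rw [fspec _ _ _ this]
    exact (q i).out_eq
  let F : ↥C →* ∀ i, G i ⧸ Subgroup.center (G i) :=
    { toFun := f
      map_one' := by
        have h := fmul 1 1
        rw [mul_one] at h
        exact mul_eq_left.mp h.symm
      map_mul' := fmul }
  exact ⟨MulEquiv.ofBijective F ⟨finj, fsurj⟩⟩
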